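/- arXiv:2512.16418 — 4 statements merged into one kernel-verified Lean document; each statement's English description precedes it below -/
import Mathlib

section
/- For every real x and t, the series Σ_{n=0}^∞ tⁿ·H_n(x) converges and equals exp(t·x − t²/2). -/
/-- Normalized probabilists' Hermite polynomial:
`H n x = ((-1)^n / n!) * exp(x^2/2) * (d^n/dx^n) exp(-x^2/2)`. -/
noncomputable def H (n : ℕ) (x : ℝ) : ℝ :=
  ((-1 : ℝ) ^ n / n.factorial) * Real.exp (x ^ 2 / 2) *
    iteratedDeriv n (fun y : ℝ => Real.exp (-y ^ 2 / 2)) x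

open Polynomial Nat Finset

lemma H_eq_aeval (n : ℕ) (x : ℝ) : H n x = aeval x (hermite n) / n.factorial := by
  unfold H
  have h1 : (fun y : ℝ => Real.exp (-y ^ 2 / 2)) = fun y : ℝ => Real.exp (-(y ^ 2 / 2)) := by
    funext y; ring_nf
  rw [h1, iteratedDeriv_eq_iterate, Polynomial.deriv_gaussian_eq_hermite_mul_gaussian]
  have h2 : Real.exp (x ^ 2 / 2) * Real.exp (-(x ^ 2 / 2)) = 1 := by
    rw [← Real.exp_add]; ring_nf; exact Real.exp_zero
  have h3 : ((-1 : ℝ) ^ n) * ((-1 : ℝ) ^ n) = 1 := by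
    rw [← pow_add, ← two_mul, pow_mul]; norm_num
  calc ((-1:ℝ) ^ n / n.factorial) * Real.exp (x ^ 2 / 2) *
        ((-1 : ℝ) ^ n * aeval x (hermite n) * Real.exp (-(x ^ 2 / 2)))
      = ((-1:ℝ) ^ n * (-1:ℝ) ^ n) * (Real.exp (x ^ 2 / 2) * Real.exp (-(x ^ 2 / 2))) *
        (aeval x (hermite n) / n.factorial) := by ring
    _ = aeval x (hermite n) / n.factorial := by rw [h2, h3]; ring

lemma two_mul_factorial (m : ℕ) : (2 * m)! = 2 ^ m * m ! * (2 * m - 1)‼ := by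
  cases m with
  | zero => rfl
  | succ m =>
    have h : 2 * (m + 1) = (2 * m + 1) + 1 := by ring
    rw [h, Nat.factorial_eq_mul_doubleFactorial]
    have h2 : 2 * m + 1 + 1 = 2 * (m + 1) := by ring
    rw [h2, Nat.doubleFactorial_two_mul]
    have h3 : 2 * (m + 1) - 1 = 2 * m + 1 := by omega
    rw [h3]

/-- coefficient of the even-index part of the exp(-t²/2) series -/
noncomputable def d (m : ℕ) : ℝ :=
  if Even m then (-1 : ℝ) ^ (m / 2) / (2 ^ (m / 2) * (m / 2)!) else 0

lemma coeff_key {n k : ℕ} (h : k ≤ n) :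
    ((hermite n).coeff k : ℝ) * k ! = n ! * d (n - k) := by
  by_cases hnk : Even (n + k)
  · have he : Even (n - k) := (Nat.even_sub h).mpr (Nat.even_add.mp hnk)
    obtain ⟨m, hm⟩ := he
    have hm' : n - k = 2 * m := by omega
    have hdiv : (n - k) / 2 = m := by omega
    rw [coeff_hermite_of_even_add hnk, d, if_pos (by rw [hm']; exact even_two_mul m), hdiv, hm']
    have hnat : n ! = n.choose k * k ! * (2 ^ m * m ! * (2 * m - 1)‼) := by
      rw [← two_mul_factorial, ← hm']
      rw [← Nat.choose_mul_factorial_mul_factorial h]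
      try ring
    have hcast : (n ! : ℝ) = n.choose k * k ! * (2 ^ m * m ! * (2 * m - 1)‼) := by
      exact_mod_cast congrArg (Nat.cast : ℕ → ℝ) hnat
    rw [hcast, ← mul_div_assoc, eq_div_iff (by positivity : ((2:ℝ) ^ m * m !) ≠ 0)]
    push_cast
    ring
  · rw [coeff_hermite_of_odd_add (Nat.not_even_iff_odd.mp hnk), d, if_neg, Int.cast_zero,
      zero_mul, mul_zero]
    intro he
    exact hnk ((Nat.even_add.mpr) ((Nat.even_sub h).mp he))

lemma hasSum_d (t : ℝ) : HasSum (fun m : ℕ => t ^ m * d m) (Real.exp (-t ^ 2 / 2)) := by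
  have hinj : Function.Injective (fun k : ℕ => 2 * k) := fun a b hab => by
    dsimp at hab; omega
  have h0 : ∀ m : ℕ, m ∉ Set.range (fun k : ℕ => 2 * k) → t ^ m * d m = 0 := by
    intro m hm
    have : ¬ Even m := by
      intro ⟨k, hk⟩; exact hm ⟨k, by dsimp; omega⟩
    simp [d, this]
  rw [← Function.Injective.hasSum_iff hinj h0]
  have hexp : HasSum (fun k : ℕ => (-t ^ 2 / 2) ^ k / k !) (Real.exp (-t ^ 2 / 2)) := by
    rw [Real.exp_eq_exp_ℝ]
    exact NormedSpace.expSeries_div_hasSum_exp (-t ^ 2 / 2)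
  convert hexp using 2 with k
  have hev2 : Even (2 * k) := even_two_mul k
  simp only [Function.comp_apply, d, if_pos hev2, Nat.mul_div_cancel_left k (by norm_num : 0 < 2)]
  rw [show (-t ^ 2 / 2 : ℝ) = (-1) * (t ^ 2 / 2) by ring, mul_pow, div_pow, pow_mul]
  field_simp

lemma summable_norm_d (t : ℝ) : Summable (fun m : ℕ => ‖t ^ m * d m‖) := by
  have hinj : Function.Injective (fun k : ℕ => 2 * k) := fun a b hab => by
    dsimp at hab; omega
  have h0 : ∀ m : ℕ, m ∉ Set.range (fun k : ℕ => 2 * k) → ‖t ^ m * d m‖ = 0 := by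
    intro m hm
    have : ¬ Even m := by
      intro ⟨k, hk⟩; exact hm ⟨k, by dsimp; omega⟩
    simp [d, this]
  rw [← Function.Injective.summable_iff hinj h0]
  apply Summable.congr (Real.summable_pow_div_factorial (t ^ 2 / 2))
  intro k
  have hev : Even (2 * k) := even_two_mul k
  simp only [Function.comp_apply, d, if_pos hev,
    Nat.mul_div_cancel_left k (by norm_num : 0 < 2)]
  rw [Real.norm_eq_abs, abs_mul, abs_div, abs_pow, abs_pow, abs_neg, abs_one, one_pow,
    abs_mul, abs_pow, abs_of_nonneg (by norm_num : (0:ℝ) ≤ 2),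
    abs_of_nonneg (by positivity : (0:ℝ) ≤ (k ! : ℝ)), pow_mul, sq_abs, div_pow]
  ring

/-- Generating function of the normalized Hermite polynomials:
for all real `x` and `t`, `Σ_{n} t^n * H n x` converges to `exp (t*x - t^2/2)`. -/
theorem hermite_generating_function (x t : ℝ) :
    HasSum (fun n : ℕ => t ^ n * H n x) (Real.exp (t * x - t ^ 2 / 2)) := by
  have hf : HasSum (fun k : ℕ => (t * x) ^ k / (k ! : ℝ)) (Real.exp (t * x)) := by
    rw [Real.exp_eq_exp_ℝ]
    exact NormedSpace.expSeries_div_hasSum_exp (t * x)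
  have hg := hasSum_d t
  have hfn : Summable (fun k : ℕ => ‖(t * x) ^ k / (k ! : ℝ)‖) := by
    apply Summable.congr (Real.summable_pow_div_factorial |t * x|)
    intro k
    rw [norm_div, norm_pow, Real.norm_eq_abs, Real.norm_eq_abs,
      abs_of_nonneg (by positivity : (0:ℝ) ≤ (k ! : ℝ))]
  have hgn := summable_norm_d t
  have key := hasSum_sum_range_mul_of_summable_norm hfn hgn
  rw [hf.tsum_eq, hg.tsum_eq, ← Real.exp_add] at key
  have hexp : t * x + -t ^ 2 / 2 = t * x - t ^ 2 / 2 := by ring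
  rw [hexp] at key
  apply key.congr_fun
  intro n
  -- show ∑ k in range (n+1), (t*x)^k/k! * (t^(n-k) * d (n-k)) = t^n * H n x
  rw [H_eq_aeval, aeval_eq_sum_range' (lt_of_le_of_lt (natDegree_hermite.le) (lt_add_one n)) x]
  rw [Finset.sum_div, Finset.mul_sum]
  apply Finset.sum_congr rfl
  intro k hk
  have hkn : k ≤ n := Nat.lt_succ_iff.mp (Finset.mem_range.mp hk)
  have hc := coeff_key hkn
  have hfk : (0:ℝ) < (k ! : ℝ) := by exact_mod_cast k.factorial_pos
  have hfn' : (0:ℝ) < (n ! : ℝ) := by exact_mod_cast n.factorial_pos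
  have hdval : d (n - k) = ((hermite n).coeff k : ℝ) * (k ! : ℝ) / (n ! : ℝ) := by
    rw [hc]; field_simp
  have ht : t ^ k * t ^ (n - k) = t ^ n := by
    rw [← pow_add, Nat.add_sub_cancel' hkn]
  rw [hdval, zsmul_eq_mul, ← ht, mul_pow]
  field_simp
  try ring
end

section
/- Let 0 < s ≤ t and let X and Y be independent real-valued random variables on a probability space, with X centered Gaussian of variance s and Y centered Gaussian of variance t − s. Then for every n ∈ ℕ, almost surely E[ H_n((X+Y)/√t) | σ(X) ] = (s/t)^{n/2}·H_n(X/√s), where E[·|σ(X)] denotes conditional expectation with respect to the σ-algebra generated by X. -/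
open MeasureTheory ProbabilityTheory

open Polynomial
open scoped NNReal ENNReal

section Aux

/-- Real Hermite polynomial (probabilists', unnormalized). -/
noncomputable def HeR (n : ℕ) : Polynomial ℝ := (Polynomial.hermite n).map (Int.castRingHom ℝ)

lemma HeR_zero : HeR 0 = 1 := by simp [HeR, hermite_zero]

lemma HeR_one : HeR 1 = X := by simp [HeR, hermite_one]

lemma HeR_succ (n : ℕ) : HeR (n + 1) = X * HeR n - derivative (HeR n) := by
  simp [HeR, hermite_succ, Polynomial.derivative_map]

lemma derivative_HeR (n : ℕ) :
    derivative (HeR (n + 1)) = C ((n : ℝ) + 1) * HeR n := by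
  induction n with
  | zero => simp [HeR_one, HeR_zero]
  | succ n ih =>
      rw [HeR_succ (n + 1)]
      rw [derivative_sub, derivative_mul, derivative_X, one_mul, ih, derivative_mul,
        derivative_C, zero_mul, zero_add, HeR_succ n]
      simp only [Nat.cast_add, Nat.cast_one, C_add, C_1]
      ring

lemma eval_HeR (n : ℕ) (x : ℝ) : (HeR n).eval x = Polynomial.aeval x (Polynomial.hermite n) := by
  rw [HeR, eval_map, aeval_def]
  rfl

lemma continuous_eval_HeR (n : ℕ) : Continuous fun x : ℝ => (HeR n).eval x :=
  (HeR n).continuous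

lemma H_eq (n : ℕ) (x : ℝ) : H n x = (HeR n).eval x / n.factorial := by
  have h1 : (fun y : ℝ => Real.exp (-y ^ 2 / 2)) = fun y : ℝ => Real.exp (-(y ^ 2 / 2)) := by
    funext y; rw [neg_div]
  rw [H, h1, iteratedDeriv_eq_iterate, Polynomial.deriv_gaussian_eq_hermite_mul_gaussian,
    eval_HeR]
  have h2 : Real.exp (x ^ 2 / 2) * Real.exp (-(x ^ 2 / 2)) = 1 := by
    rw [← Real.exp_add]; simp
  have h3 : ((-1 : ℝ) ^ n) * ((-1 : ℝ) ^ n) = 1 := by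
    rw [← pow_add]; exact (neg_one_pow_eq_one_iff_even (by norm_num)).2 ⟨n, rfl⟩
  calc ((-1 : ℝ) ^ n / n.factorial) * Real.exp (x ^ 2 / 2) *
        ((-1 : ℝ) ^ n * Polynomial.aeval x (Polynomial.hermite n) * Real.exp (-(x ^ 2 / 2)))
      = ((-1 : ℝ) ^ n * (-1 : ℝ) ^ n) * (Real.exp (x ^ 2 / 2) * Real.exp (-(x ^ 2 / 2))) *
        (Polynomial.aeval x (Polynomial.hermite n) / n.factorial) := by ring
    _ = Polynomial.aeval x (Polynomial.hermite n) / n.factorial := by rw [h2, h3]; ring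

lemma integrable_pow_mul_exp {b : ℝ} (hb : 0 < b) (m : ℕ) :
    Integrable (fun y : ℝ => y ^ m * Real.exp (-b * y ^ 2)) := by
  have hm : (-1 : ℝ) < (m : ℝ) := lt_of_lt_of_le neg_one_lt_zero (Nat.cast_nonneg m)
  simpa [Real.rpow_natCast] using integrable_rpow_mul_exp_neg_mul_sq hb hm

lemma toReal_gaussianPDF (v : ℝ≥0) (x : ℝ) :
    (gaussianPDF 0 v x).toReal = gaussianPDFReal 0 v x :=
  ENNReal.toReal_ofReal (gaussianPDFReal_nonneg _ _ _)

lemma integrable_pow_gaussian (v : ℝ≥0) (m : ℕ) :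
    Integrable (fun y : ℝ => y ^ m) (gaussianReal 0 v) := by
  by_cases hv : v = 0
  · subst hv
    simp only [gaussianReal_zero_var]
    refine (integrable_const ((0:ℝ) ^ m)).congr ?_
    rw [MeasureTheory.ae_dirac_eq]
    exact Filter.eventually_pure.2 rfl
  · rw [gaussianReal_of_var_ne_zero _ hv,
      integrable_withDensity_iff (measurable_gaussianPDF _ _)
        (Filter.Eventually.of_forall fun _ => ENNReal.ofReal_lt_top)]
    have hv' : (0:ℝ) < (v:ℝ) := NNReal.coe_pos.mpr (pos_iff_ne_zero.mpr hv)
    have key := (integrable_pow_mul_exp (b := (2*(v:ℝ))⁻¹) (by positivity) m).const_mul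
      ((Real.sqrt (2 * Real.pi * v))⁻¹)
    refine key.congr (Filter.Eventually.of_forall fun x => ?_)
    simp only
    rw [_root_.toReal_gaussianPDF, gaussianPDFReal,
      show -((2:ℝ)*(v:ℝ))⁻¹ * x ^ 2 = -(x - 0) ^ 2 / (2 * (v:ℝ)) by field_simp; ring]
    ring

lemma integral_gaussianReal_eq (v : ℝ≥0) (hv : v ≠ 0) (g : ℝ → ℝ) :
    ∫ y, g y ∂(gaussianReal 0 v) = ∫ y, gaussianPDFReal 0 v y * g y := by
  rw [gaussianReal_of_var_ne_zero _ hv]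
  have h : volume.withDensity (gaussianPDF 0 v)
      = volume.withDensity (fun y => ((gaussianPDFReal 0 v y).toNNReal : ℝ≥0∞)) := rfl
  rw [h, integral_withDensity_eq_integral_smul
    ((stronglyMeasurable_gaussianPDFReal 0 v).measurable.real_toNNReal) g]
  congr 1
  funext y
  rw [NNReal.smul_def, smul_eq_mul, Real.coe_toNNReal _ (gaussianPDFReal_nonneg _ _ _)]

lemma integral_pow_mul_exp_rec {b : ℝ} (hb : 0 < b) (k : ℕ) :
    ∫ y : ℝ, y ^ (k+1) * Real.exp (-b * y ^ 2) =
      (k : ℝ) / (2*b) * ∫ y : ℝ, y ^ (k-1) * Real.exp (-b * y ^ 2) := by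
  have hF : ∀ y : ℝ, HasDerivAt (fun y : ℝ => y ^ k * Real.exp (-b * y ^ 2))
      ((k:ℝ) * y ^ (k-1) * Real.exp (-b * y^2)
        + y ^ k * ((-b * (2*y)) * Real.exp (-b*y^2))) y := by
    intro y
    have h1 : HasDerivAt (fun y : ℝ => y ^ k) ((k:ℝ) * y ^ (k-1)) y := hasDerivAt_pow k y
    have h2 : HasDerivAt (fun y : ℝ => -b * y ^ 2) (-b * (2*y)) y := by
      simpa [pow_one] using ((hasDerivAt_pow 2 y).const_mul (-b))
    exact (h1.mul h2.exp).congr_deriv (by ring)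
  have int1 : Integrable (fun y : ℝ => (k:ℝ) * (y^(k-1) * Real.exp (-b*y^2))) :=
    (integrable_pow_mul_exp hb (k-1)).const_mul (k:ℝ)
  have int2 : Integrable (fun y : ℝ => (-b*2) * (y^(k+1) * Real.exp (-b*y^2))) :=
    (integrable_pow_mul_exp hb (k+1)).const_mul (-b*2)
  have hint : Integrable (fun y : ℝ => (k:ℝ) * y ^ (k-1) * Real.exp (-b * y^2)
      + y ^ k * ((-b * (2*y)) * Real.exp (-b*y^2))) := by
    refine (int1.add int2).congr (Filter.Eventually.of_forall fun y => ?_)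
    simp only [Pi.add_apply]
    ring
  have h0 := integral_eq_zero_of_hasDerivAt_of_integrable hF hint (integrable_pow_mul_exp hb k)
  have e1 : ∫ y : ℝ, ((k:ℝ) * y ^ (k-1) * Real.exp (-b * y^2)
      + y ^ k * ((-b * (2*y)) * Real.exp (-b*y^2)))
      = (k:ℝ) * (∫ y : ℝ, y^(k-1) * Real.exp (-b*y^2))
        + (-b*2) * (∫ y : ℝ, y^(k+1) * Real.exp (-b*y^2)) := by
    have h2' := integral_add int1 int2
    rw [integral_const_mul, integral_const_mul] at h2'
    rw [← h2']
    congr 1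
    funext y
    ring
  rw [e1] at h0
  have hb' : (2:ℝ) * b ≠ 0 := by positivity
  rw [div_mul_eq_mul_div, eq_div_iff hb']
  linear_combination -h0

lemma gaussian_stein_pow (v : ℝ≥0) (k : ℕ) :
    ∫ y, y * y ^ k ∂(gaussianReal 0 v)
      = (v:ℝ) * k * ∫ y, y ^ (k-1) ∂(gaussianReal 0 v) := by
  by_cases hv : v = 0
  · subst hv
    simp [gaussianReal_zero_var, integral_dirac]
  · have hv' : (0:ℝ) < (v:ℝ) := NNReal.coe_pos.mpr (pos_iff_ne_zero.mpr hv)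
    have hb : (0:ℝ) < (2*(v:ℝ))⁻¹ := by positivity
    have hexp : ∀ y : ℝ, gaussianPDFReal 0 v y
        = (Real.sqrt (2*Real.pi*v))⁻¹ * Real.exp (-(2*(v:ℝ))⁻¹ * y^2) := by
      intro y
      rw [gaussianPDFReal, show -((2:ℝ)*(v:ℝ))⁻¹ * y^2 = -(y-0)^2/(2*(v:ℝ)) by field_simp; ring]
    rw [integral_gaussianReal_eq _ hv, integral_gaussianReal_eq _ hv]
    have l1 : ∫ y : ℝ, gaussianPDFReal 0 v y * (y * y ^ k)
        = (Real.sqrt (2*Real.pi*v))⁻¹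
          * ∫ y : ℝ, y^(k+1) * Real.exp (-(2*(v:ℝ))⁻¹ * y^2) := by
      rw [← integral_const_mul]
      congr 1
      funext y
      rw [hexp y]
      ring
    have l2 : ∫ y : ℝ, gaussianPDFReal 0 v y * y ^ (k-1)
        = (Real.sqrt (2*Real.pi*v))⁻¹
          * ∫ y : ℝ, y^(k-1) * Real.exp (-(2*(v:ℝ))⁻¹ * y^2) := by
      rw [← integral_const_mul]
      congr 1
      funext y
      rw [hexp y]
      ring
    rw [l1, l2, integral_pow_mul_exp_rec hb k,
      show (k:ℝ)/(2*(2*(v:ℝ))⁻¹) = (v:ℝ)*k by field_simp]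
    ring

lemma integrable_polyeval (v : ℝ≥0) (P : Polynomial ℝ) :
    Integrable (fun y : ℝ => P.eval y) (gaussianReal 0 v) := by
  have h : (fun y : ℝ => P.eval y)
      = fun y => ∑ k ∈ Finset.range (P.natDegree + 1), P.coeff k * y ^ k := by
    funext y
    exact eval_eq_sum_range y
  rw [h]
  exact integrable_finset_sum _ fun k _ => (integrable_pow_gaussian v k).const_mul _

lemma stein_poly (v : ℝ≥0) (P : Polynomial ℝ) :
    ∫ y, y * P.eval y ∂(gaussianReal 0 v)
      = (v:ℝ) * ∫ y, (derivative P).eval y ∂(gaussianReal 0 v) := by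
  induction P using Polynomial.induction_on' with
  | add p q hp hq =>
      have ip : Integrable (fun y : ℝ => y * p.eval y) (gaussianReal 0 v) := by
        have := integrable_polyeval v (X * p)
        simpa [eval_mul] using this
      have iq : Integrable (fun y : ℝ => y * q.eval y) (gaussianReal 0 v) := by
        have := integrable_polyeval v (X * q)
        simpa [eval_mul] using this
      have e1 : ∫ y, y * (p + q).eval y ∂(gaussianReal 0 v)
          = (∫ y, y * p.eval y ∂(gaussianReal 0 v))
            + ∫ y, y * q.eval y ∂(gaussianReal 0 v) := by
        rw [← integral_add ip iq]
        congr 1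
        funext y
        simp [eval_add]
        ring
      rw [e1, hp, hq, derivative_add]
      rw [← mul_add, ← integral_add (integrable_polyeval v _) (integrable_polyeval v _)]
      congr 1
      apply integral_congr_ae
      filter_upwards with y
      simp [eval_add]
  | monomial k a =>
      have e1 : ∫ y, y * (monomial k a).eval y ∂(gaussianReal 0 v)
          = a * ∫ y, y * y ^ k ∂(gaussianReal 0 v) := by
        rw [← integral_const_mul]
        congr 1
        funext y
        simp [eval_monomial]
        ring
      rw [e1, gaussian_stein_pow v k, derivative_monomial]
      have e2 : ∫ y, (monomial (k-1) (a * k)).eval y ∂(gaussianReal 0 v)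
          = (a * k) * ∫ y, y ^ (k-1) ∂(gaussianReal 0 v) := by
        rw [← integral_const_mul]
        congr 1
        funext y
        simp [eval_monomial]
      rw [e2]
      ring

lemma hermite_gaussian_integral {s t : ℝ} (hs : 0 < s) (hst : s ≤ t) (x : ℝ) (n : ℕ) :
    ∫ y, (HeR n).eval ((x + y) / Real.sqrt t) ∂(gaussianReal 0 (t-s).toNNReal)
      = Real.sqrt (s/t) ^ n * (HeR n).eval (x / Real.sqrt s) := by
  have ht : 0 < t := hs.trans_le hst
  set τ := Real.sqrt t with hτdef
  set σ := Real.sqrt s with hσdef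
  set c := Real.sqrt (s/t) with hcdef
  set v : ℝ≥0 := (t-s).toNNReal with hvdef
  have hτ : 0 < τ := Real.sqrt_pos.2 ht
  have hσ : 0 < σ := Real.sqrt_pos.2 hs
  have hτ2 : τ^2 = t := Real.sq_sqrt ht.le
  have hσ2 : σ^2 = s := Real.sq_sqrt hs.le
  have hc : c = σ / τ := Real.sqrt_div hs.le t
  have hv : (v:ℝ) = t - s := Real.coe_toNNReal _ (sub_nonneg.2 hst)
  have harg : ∀ y : ℝ, (x + y) / τ = τ⁻¹ * y + x/τ := by
    intro y; field_simp; ring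
  -- integrability helpers
  have iA : ∀ k : ℕ, Integrable (fun y : ℝ => (HeR k).eval ((x+y)/τ)) (gaussianReal 0 v) := by
    intro k
    have h := integrable_polyeval v ((HeR k).comp (C τ⁻¹ * X + C (x/τ)))
    refine h.congr (Filter.Eventually.of_forall fun y => ?_)
    simp [eval_comp, harg y]
  have iyA : ∀ k : ℕ, Integrable (fun y : ℝ => y * (HeR k).eval ((x+y)/τ))
      (gaussianReal 0 v) := by
    intro k
    have h := integrable_polyeval v (X * ((HeR k).comp (C τ⁻¹ * X + C (x/τ))))
    refine h.congr (Filter.Eventually.of_forall fun y => ?_)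
    simp [eval_mul, eval_comp, harg y]
  -- Stein step
  have hstein : ∀ k : ℕ, ∫ y, y * (HeR k).eval ((x+y)/τ) ∂(gaussianReal 0 v)
      = (v:ℝ) * τ⁻¹ * ∫ y, (derivative (HeR k)).eval ((x+y)/τ) ∂(gaussianReal 0 v) := by
    intro k
    have h1 : ∫ y, y * (HeR k).eval ((x+y)/τ) ∂(gaussianReal 0 v)
        = ∫ y, y * ((HeR k).comp (C τ⁻¹ * X + C (x/τ))).eval y ∂(gaussianReal 0 v) := by
      apply integral_congr_ae
      filter_upwards with y
      simp [eval_comp, harg y]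
    rw [h1, stein_poly]
    have h2 : derivative ((HeR k).comp (C τ⁻¹ * X + C (x/τ)))
        = C τ⁻¹ * (derivative (HeR k)).comp (C τ⁻¹ * X + C (x/τ)) := by
      rw [derivative_comp]
      simp
    rw [h2, mul_assoc]
    congr 1
    rw [← integral_const_mul]
    apply integral_congr_ae
    filter_upwards with y
    simp [eval_mul, eval_comp, harg y]
  -- mean zero
  have hY0 : ∫ y, y ∂(gaussianReal 0 v) = 0 := by
    have h := gaussian_stein_pow v 0
    simpa using h
  -- two-step induction
  suffices hsuff : ∀ m : ℕ,
      (∫ y, (HeR m).eval ((x + y) / τ) ∂(gaussianReal 0 v)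
        = c ^ m * (HeR m).eval (x / σ)) ∧
      (∫ y, (HeR (m+1)).eval ((x + y) / τ) ∂(gaussianReal 0 v)
        = c ^ (m+1) * (HeR (m+1)).eval (x / σ)) by
    exact (hsuff n).1
  have base0 : ∫ y, (HeR 0).eval ((x + y) / τ) ∂(gaussianReal 0 v)
      = c ^ 0 * (HeR 0).eval (x / σ) := by
    simp [HeR_zero]
  have base1 : ∫ y, (HeR 1).eval ((x + y) / τ) ∂(gaussianReal 0 v)
      = c ^ 1 * (HeR 1).eval (x / σ) := by
    simp only [HeR_one, eval_X, pow_one]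
    have i1 : Integrable (fun y : ℝ => τ⁻¹ * y) (gaussianReal 0 v) := by
      have h := (integrable_pow_gaussian v 1).const_mul τ⁻¹
      simpa using h
    have e0 : ∫ y, (x + y) / τ ∂(gaussianReal 0 v)
        = ∫ y, (τ⁻¹ * y + x/τ) ∂(gaussianReal 0 v) := by
      apply integral_congr_ae
      filter_upwards with y
      rw [harg y]
    rw [e0, integral_add i1 (integrable_const (x/τ)), integral_const_mul, hY0,
      integral_const]
    simp only [probReal_univ, ENNReal.toReal_one, one_smul, mul_zero, zero_add]
    rw [hc]
    field_simp
  refine fun m => Nat.rec ⟨base0, base1⟩ (fun m ih => ⟨ih.2, ?_⟩) m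
  -- step: prove for m+2
  obtain ⟨ih1, ih2⟩ := ih
  set γ := gaussianReal 0 v
  set I1 := ∫ y, (HeR (m+1)).eval ((x + y) / τ) ∂γ with hI1
  set I3 := ∫ y, (HeR m).eval ((x + y) / τ) ∂γ with hI3
  have hI2 : ∫ y, y * (HeR (m+1)).eval ((x + y) / τ) ∂γ
      = (v:ℝ) * τ⁻¹ * (((m:ℝ)+1) * I3) := by
    rw [hstein (m+1)]
    congr 1
    rw [derivative_HeR m, ← integral_const_mul]
    apply integral_congr_ae
    filter_upwards with y
    simp [eval_mul]
  have hsplit : ∫ y, (HeR (m+2)).eval ((x + y) / τ) ∂γ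
      = (x/τ) * I1 + τ⁻¹ * ((v:ℝ) * τ⁻¹ * (((m:ℝ)+1) * I3)) - ((m:ℝ)+1) * I3 := by
    have e0 : ∫ y, (HeR (m+2)).eval ((x + y) / τ) ∂γ
        = ∫ y, ((x/τ) * (HeR (m+1)).eval ((x+y)/τ)
            + τ⁻¹ * (y * (HeR (m+1)).eval ((x+y)/τ))
            - ((m:ℝ)+1) * (HeR m).eval ((x+y)/τ)) ∂γ := by
      apply integral_congr_ae
      filter_upwards with y
      rw [show m + 2 = (m+1) + 1 from rfl, HeR_succ (m+1), derivative_HeR m]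
      simp only [eval_sub, eval_mul, eval_X, eval_C]
      rw [harg y]
      ring
    have hf1 : Integrable (fun y : ℝ => (x/τ) * (HeR (m+1)).eval ((x+y)/τ)) γ :=
      (iA (m+1)).const_mul _
    have hf2 : Integrable (fun y : ℝ => τ⁻¹ * (y * (HeR (m+1)).eval ((x+y)/τ))) γ :=
      (iyA (m+1)).const_mul _
    have hf12 : Integrable (fun y : ℝ => (x/τ) * (HeR (m+1)).eval ((x+y)/τ)
        + τ⁻¹ * (y * (HeR (m+1)).eval ((x+y)/τ))) γ := hf1.add hf2
    have hf3 : Integrable (fun y : ℝ => ((m:ℝ)+1) * (HeR m).eval ((x+y)/τ)) γ :=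
      (iA m).const_mul _
    rw [e0, integral_sub hf12 hf3, integral_add hf1 hf2,
      integral_const_mul, integral_const_mul, integral_const_mul, hI2]
  rw [hsplit, ih2, ih1]
  -- now pure algebra
  have hv' : (v:ℝ) = τ^2 - σ^2 := by rw [hτ2, hσ2, hv]
  simp only [Nat.succ_eq_add_one]
  rw [HeR_succ (m+1), derivative_HeR m]
  simp only [eval_sub, eval_mul, eval_X, eval_C]
  rw [hv', hc, pow_succ, pow_succ]
  field_simp [hτ.ne', hσ.ne']
  simp only [div_pow]
  field_simp
  ring

lemma continuous_H (n : ℕ) : Continuous (H n) := by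
  have h : H n = fun z => (HeR n).eval z / n.factorial := funext (H_eq n)
  rw [h]
  exact (continuous_eval_HeR n).div_const _

lemma integrable_polyeval_add_prod (va vb : ℝ≥0) (P : Polynomial ℝ) :
    Integrable (fun p : ℝ × ℝ => P.eval (p.1 + p.2))
      ((gaussianReal 0 va).prod (gaussianReal 0 vb)) := by
  induction P using Polynomial.induction_on' with
  | add p q hp hq =>
      refine (hp.add hq).congr (Filter.Eventually.of_forall fun z => ?_)
      simp [eval_add]
  | monomial k a =>
      have h : (fun p : ℝ × ℝ => (monomial k a).eval (p.1 + p.2))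
          = fun p => ∑ j ∈ Finset.range (k+1),
              (a * (k.choose j : ℝ)) * (p.1 ^ j * p.2 ^ (k - j)) := by
        funext p
        rw [eval_monomial, add_pow, Finset.mul_sum]
        apply Finset.sum_congr rfl
        intro j hj
        ring
      rw [h]
      refine integrable_finset_sum _ fun j _ => ?_
      exact ((integrable_pow_gaussian va j).mul_prod
        (integrable_pow_gaussian vb (k-j))).const_mul _


end Aux

/-- Conditional-expectation formula for Hermite polynomials of Gaussian increments:
if `X` and `Y` are independent centered Gaussians with variances `s` and `t − s`
(`0 < s ≤ t`), then `E[ H_n((X+Y)/√t) | σ(X) ] = (s/t)^{n/2} · H_n(X/√s)` a.s. -/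
theorem hermite_condexp {Ω : Type*} [MeasurableSpace Ω] (μ : Measure Ω)
    [IsProbabilityMeasure μ] (s t : ℝ) (hs : 0 < s) (hst : s ≤ t)
    (X Y : Ω → ℝ) (hXm : Measurable X) (hYm : Measurable Y)
    (hindep : IndepFun X Y μ)
    (hX : Measure.map X μ = gaussianReal 0 s.toNNReal)
    (hY : Measure.map Y μ = gaussianReal 0 (t - s).toNNReal) (n : ℕ) :
    μ[fun ω => H n ((X ω + Y ω) / Real.sqrt t) |
        MeasurableSpace.comap X Real.measurableSpace]
      =ᵐ[μ] fun ω => Real.sqrt (s / t) ^ n * H n (X ω / Real.sqrt s) := by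
  have ht : 0 < t := lt_of_lt_of_le hs hst
  have hm : MeasurableSpace.comap X Real.measurableSpace ≤ _ := hXm.comap_le
  set va := s.toNNReal with hva
  set vb := (t - s).toNNReal with hvb
  set φ : ℝ × ℝ → ℝ := fun p => H n ((p.1 + p.2) / Real.sqrt t) with hφdef
  set G : ℝ → ℝ := fun z => Real.sqrt (s/t) ^ n * H n (z / Real.sqrt s) with hGdef
  have hφcont : Continuous φ :=
    (continuous_H n).comp ((continuous_fst.add continuous_snd).div_const _)
  have hGcont : Continuous G :=
    continuous_const.mul ((continuous_H n).comp (continuous_id.div_const _))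
  have hmap : μ.map (fun ω => (X ω, Y ω)) = (gaussianReal 0 va).prod (gaussianReal 0 vb) := by
    rw [← hX, ← hY]
    exact (indepFun_iff_map_prod_eq_prod_map_map hXm.aemeasurable hYm.aemeasurable).mp hindep
  have hφint : Integrable φ ((gaussianReal 0 va).prod (gaussianReal 0 vb)) := by
    have key := (integrable_polyeval_add_prod va vb
      ((HeR n).comp (C (Real.sqrt t)⁻¹ * Polynomial.X))).div_const (n.factorial : ℝ)
    refine key.congr (Filter.Eventually.of_forall fun p => ?_)
    show eval (p.1 + p.2) ((HeR n).comp (C (Real.sqrt t)⁻¹ * Polynomial.X)) / (n.factorial : ℝ)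
      = H n ((p.1 + p.2) / Real.sqrt t)
    rw [eval_comp]
    simp only [eval_mul, eval_C, eval_X]
    rw [H_eq, inv_mul_eq_div]
  have hintf : Integrable (fun ω => H n ((X ω + Y ω) / Real.sqrt t)) μ := by
    have h1 : Integrable φ (μ.map fun ω => (X ω, Y ω)) := hmap ▸ hφint
    have h2 := (integrable_map_measure (hmap ▸ hφcont.aestronglyMeasurable)
      (hXm.prodMk hYm).aemeasurable).mp h1
    exact h2
  have hGgauss : Integrable G (gaussianReal 0 va) := by
    have key := (integrable_polyeval va
      ((HeR n).comp (C (Real.sqrt s)⁻¹ * Polynomial.X))).const_mul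
        (Real.sqrt (s/t) ^ n / (n.factorial : ℝ))
    refine key.congr (Filter.Eventually.of_forall fun z => ?_)
    show Real.sqrt (s/t) ^ n / (n.factorial : ℝ)
        * eval z ((HeR n).comp (C (Real.sqrt s)⁻¹ * Polynomial.X))
      = Real.sqrt (s/t) ^ n * H n (z / Real.sqrt s)
    rw [eval_comp]
    simp only [eval_mul, eval_C, eval_X]
    rw [H_eq, inv_mul_eq_div]
    ring
  have hGint : Integrable (fun ω => G (X ω)) μ := by
    have h1 : Integrable G (μ.map X) := hX ▸ hGgauss
    exact (integrable_map_measure (hX ▸ hGcont.aestronglyMeasurable)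
      hXm.aemeasurable).mp h1
  have hinner : ∀ x : ℝ, ∫ y, φ (x, y) ∂(gaussianReal 0 vb) = G x := by
    intro x
    have e1 : ∫ y, φ (x, y) ∂(gaussianReal 0 vb)
        = (∫ y, (HeR n).eval ((x + y) / Real.sqrt t) ∂(gaussianReal 0 vb))
            / n.factorial := by
      rw [← integral_div]
      apply integral_congr_ae
      filter_upwards with y
      rw [hφdef]
      simp only
      rw [H_eq]
    rw [e1, hvb, hermite_gaussian_integral hs hst x n]
    show Real.sqrt (s/t) ^ n * eval (x / Real.sqrt s) (HeR n) / (n.factorial : ℝ)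
      = Real.sqrt (s/t) ^ n * H n (x / Real.sqrt s)
    rw [H_eq]
    ring
  refine (ae_eq_condExp_of_forall_setIntegral_eq hm hintf
    (fun s' _ _ => hGint.integrableOn) (fun s' hs' _ => ?_) ?_).symm
  · obtain ⟨A, hA, rfl⟩ := hs'
    have hmapX : ∫ ω in X ⁻¹' A, G (X ω) ∂μ = ∫ z in A, G z ∂(gaussianReal 0 va) := by
      rw [← hX, setIntegral_map hA (hX ▸ hGcont.aestronglyMeasurable) hXm.aemeasurable]
    have hpre : (fun ω => (X ω, Y ω)) ⁻¹' (A ×ˢ (Set.univ : Set ℝ)) = X ⁻¹' A := by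
      rw [Set.mk_preimage_prod, Set.preimage_univ, Set.inter_univ]
    have hmapXY : ∫ ω in X ⁻¹' A, H n ((X ω + Y ω) / Real.sqrt t) ∂μ
        = ∫ p in A ×ˢ (Set.univ : Set ℝ), φ p
            ∂((gaussianReal 0 va).prod (gaussianReal 0 vb)) := by
      rw [← hmap, setIntegral_map (hA.prod MeasurableSet.univ)
        (hmap ▸ hφcont.aestronglyMeasurable) (hXm.prodMk hYm).aemeasurable, hpre]
    rw [hmapX, hmapXY, setIntegral_prod φ hφint.integrableOn]
    apply setIntegral_congr_ae hA
    filter_upwards with z _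
    rw [Measure.restrict_univ, hinner z]
  · refine StronglyMeasurable.aestronglyMeasurable ?_
    have hXm' : Measurable[MeasurableSpace.comap X Real.measurableSpace] X :=
      Measurable.of_comap_le le_rfl
    exact (hGcont.measurable.comp hXm').stronglyMeasurable
end

section
/- Let n ≥ 1, τ > 0, M ∈ ℕ with M ≥ 1, and δ = τ/M. Partition [0,τ]ⁿ into the Mⁿ grid cells ∏_{k=1}^n (s_{i_k−1}, s_{i_k}] where s_i = i·δ. Let g : [0,τ]ⁿ → ℝ satisfy the coordinatewise Hölder condition |g(r_1,…,r_n) − g(u_1,…,u_n)| ≤ κ(|r_1−u_1|^β + ⋯ + |r_n−u_n|^β) for all r, u ∈ [0,τ]ⁿ, with constants κ, β > 0. Let A_M g : [0,τ]ⁿ → ℝ be the step function whose value on each grid cell is the average of g over that cell. Then ∫_{[0,τ]ⁿ} |g − A_M g|² ≤ κ² · n² · τ^{2β+n} · M^{−2β}. -/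
open MeasureTheory

/-- The step function of cell averages with respect to the uniform grid of mesh `δ`:
`cellAvg n δ g u` is the average of `g` over the half-open grid cell
`∏_k (δ·(⌈u_k/δ⌉−1), δ·⌈u_k/δ⌉]` containing `u`. -/
noncomputable def cellAvg (n : ℕ) (δ : ℝ) (g : (Fin n → ℝ) → ℝ) (u : Fin n → ℝ) : ℝ :=
  (δ ^ n)⁻¹ *
    ∫ r in Set.univ.pi fun k =>
        Set.Ioc (δ * ((⌈u k / δ⌉ : ℝ) - 1)) (δ * (⌈u k / δ⌉ : ℝ)), g r

/-- Lemma 4.4 of the paper: if `g` is coordinatewise `β`-Hölder on `[0,τ]ⁿ` with constant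
`κ`, and `A_M g` is the step function of cell averages over the uniform grid of mesh
`δ = τ/M`, then `∫_{[0,τ]ⁿ} |g − A_M g|² ≤ κ²·n²·τ^{2β+n}·M^{−2β}`. -/
theorem cell_average_approximation (n : ℕ) (hn : 1 ≤ n) (τ : ℝ) (hτ : 0 < τ)
    (M : ℕ) (hM : 1 ≤ M) (κ β : ℝ) (hκ : 0 < κ) (hβ : 0 < β)
    (g : (Fin n → ℝ) → ℝ)
    (hg : ∀ r ∈ Set.univ.pi fun _ : Fin n => Set.Icc (0 : ℝ) τ,
          ∀ u ∈ Set.univ.pi fun _ : Fin n => Set.Icc (0 : ℝ) τ,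
            |g r - g u| ≤ κ * ∑ i, |r i - u i| ^ β) :
    (∫ u in Set.univ.pi fun _ : Fin n => Set.Icc (0 : ℝ) τ,
        (g u - cellAvg n (τ / M) g u) ^ 2)
      ≤ κ ^ 2 * n ^ 2 * τ ^ (2 * β + n) * (M : ℝ) ^ (-(2 * β)) := by
  have hM0 : (0:ℝ) < M := by exact_mod_cast hM
  set δ : ℝ := τ / M with hδdef
  have hδ : 0 < δ := div_pos hτ hM0
  have hMδ : (M : ℝ) * δ = τ := by rw [hδdef]; field_simp [hM0.ne']
  set box : Set (Fin n → ℝ) := Set.univ.pi fun _ => Set.Icc (0:ℝ) τ with hbox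
  have hboxmeas : MeasurableSet box := MeasurableSet.univ_pi fun _ => measurableSet_Icc
  have hboxcompact : IsCompact box := isCompact_univ_pi fun _ => isCompact_Icc
  -- continuity of `g` on the box
  have hcont : ContinuousOn g box := by
    intro u hu
    have hh : Continuous fun r : Fin n → ℝ => κ * ∑ i, |r i - u i| ^ β := by
      apply continuous_const.mul
      apply continuous_finset_sum
      intro i _
      have habs : Continuous fun x : ℝ => |x| ^ β := by
        rw [continuous_iff_continuousAt]
        intro x
        exact (Real.continuousAt_rpow_const _ _ (Or.inr hβ.le)).comp continuous_abs.continuousAt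
      exact habs.comp ((continuous_apply i).sub continuous_const)
    have h0 : (κ * ∑ i, |u i - u i| ^ β) = 0 := by
      simp [Real.zero_rpow hβ.ne']
    have htend : Filter.Tendsto (fun r : Fin n → ℝ => κ * ∑ i, |r i - u i| ^ β)
        (nhdsWithin u box) (nhds 0) := by
      have := ((hh.tendsto u).mono_left (nhdsWithin_le_nhds (s := box)))
      rwa [h0] at this
    rw [ContinuousWithinAt, ← tendsto_sub_nhds_zero_iff]
    apply squeeze_zero_norm' ?_ htend
    filter_upwards [self_mem_nhdsWithin] with r hr
    rw [Real.norm_eq_abs]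
    exact hg r hr u hu
  have hIntBox : IntegrableOn g box := hcont.integrableOn_compact hboxcompact
  -- key pointwise bound on the open-ish box
  set S : Set (Fin n → ℝ) := Set.univ.pi fun _ => Set.Ioc (0:ℝ) τ with hS
  have key : ∀ u ∈ S, |g u - cellAvg n δ g u| ≤ κ * n * δ ^ β := by
    intro u hu
    set C : Set (Fin n → ℝ) := Set.univ.pi fun k =>
      Set.Ioc (δ * ((⌈u k / δ⌉ : ℝ) - 1)) (δ * (⌈u k / δ⌉ : ℝ)) with hC
    have hceil : ∀ k, (1:ℝ) ≤ (⌈u k / δ⌉ : ℝ) ∧ ((⌈u k / δ⌉ : ℝ)) ≤ M := by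
      intro k
      have huk := hu k (Set.mem_univ k)
      constructor
      · exact_mod_cast Int.ceil_pos.mpr (div_pos huk.1 hδ)
      · have h1 : u k / δ ≤ (M : ℤ) := by
          push_cast
          rw [div_le_iff₀ hδ]
          calc u k ≤ τ := huk.2
          _ = (M:ℝ) * δ := hMδ.symm
        exact_mod_cast Int.ceil_le.mpr h1
    have hCsub : C ⊆ box := by
      intro r hr k _
      have hrk := hr k (Set.mem_univ k)
      have h1 := (hceil k).1
      have h2 := (hceil k).2
      constructor
      · have : (0:ℝ) ≤ δ * ((⌈u k / δ⌉ : ℝ) - 1) := by nlinarith [hδ.le]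
        linarith [hrk.1]
      · calc r k ≤ δ * (⌈u k / δ⌉ : ℝ) := hrk.2
          _ ≤ δ * M := by nlinarith [hδ.le]
          _ = τ := by linarith [hMδ]
    have hvolC : volume C = ENNReal.ofReal δ ^ n := by
      rw [hC, volume_pi_pi]
      have : ∀ k : Fin n, volume (Set.Ioc (δ * ((⌈u k / δ⌉ : ℝ) - 1)) (δ * (⌈u k / δ⌉ : ℝ)))
          = ENNReal.ofReal δ := by
        intro k
        rw [Real.volume_Ioc]
        congr 1
        ring
      simp [this]
    have hvolCfin : volume C < ⊤ := by
      rw [hvolC]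
      exact ENNReal.pow_lt_top ENNReal.ofReal_lt_top
    have hvolCtoReal : (volume C).toReal = δ ^ n := by
      rw [hvolC, ENNReal.toReal_pow, ENNReal.toReal_ofReal hδ.le]
    have hIntC : IntegrableOn g C := hIntBox.mono_set hCsub
    have hIntConst : IntegrableOn (fun _ => g u) C :=
      integrableOn_const hvolCfin.ne
    have hdiff : ∫ r in C, (g u - g r) = δ ^ n * g u - ∫ r in C, g r := by
      rw [integral_sub hIntConst hIntC, setIntegral_const, measureReal_def, hvolCtoReal, smul_eq_mul]
    have hδn : (0:ℝ) < δ ^ n := pow_pos hδ n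
    have hcellAvg : cellAvg n δ g u = (δ ^ n)⁻¹ * ∫ r in C, g r := rfl
    have hrewrite : g u - cellAvg n δ g u = (δ ^ n)⁻¹ * ∫ r in C, (g u - g r) := by
      rw [hcellAvg, hdiff]
      field_simp
    -- bound the integral
    have hbound : ‖∫ r in C, (g u - g r)‖ ≤ (κ * n * δ ^ β) * (volume C).toReal := by
      apply norm_setIntegral_le_of_norm_le_const hvolCfin
      intro r hr
      rw [Real.norm_eq_abs, abs_sub_comm]
      have hru : r ∈ box := hCsub hr
      have hub : u ∈ box := by
        intro k _
        have := hu k (Set.mem_univ k)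
        exact ⟨this.1.le, this.2⟩
      calc |g r - g u| ≤ κ * ∑ i, |r i - u i| ^ β := hg r hru u hub
        _ ≤ κ * ∑ _i : Fin n, δ ^ β := by
            apply mul_le_mul_of_nonneg_left _ hκ.le
            apply Finset.sum_le_sum
            intro i _
            have hri := hr i (Set.mem_univ i)
            have hui : u i ∈ Set.Ioc (δ * ((⌈u i / δ⌉ : ℝ) - 1)) (δ * (⌈u i / δ⌉ : ℝ)) := by
              constructor
              · have : ((⌈u i / δ⌉ : ℝ) - 1) < u i / δ := by
                  have := Int.ceil_lt_add_one (u i / δ)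
                  push_cast at this ⊢
                  linarith
                calc δ * ((⌈u i / δ⌉ : ℝ) - 1) < δ * (u i / δ) := by
                      exact mul_lt_mul_of_pos_left this hδ
                  _ = u i := by field_simp
              · have : u i / δ ≤ (⌈u i / δ⌉ : ℝ) := Int.le_ceil _
                calc u i = δ * (u i / δ) := by field_simp
                  _ ≤ δ * (⌈u i / δ⌉ : ℝ) := mul_le_mul_of_nonneg_left this hδ.le
            have habsle : |r i - u i| ≤ δ := by
              rw [abs_sub_le_iff]
              constructor
              · nlinarith [hri.2, hui.1]
              · nlinarith [hui.2, hri.1]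
            exact Real.rpow_le_rpow (abs_nonneg _) habsle hβ.le
        _ = κ * n * δ ^ β := by
            rw [Finset.sum_const, Finset.card_univ, Fintype.card_fin, nsmul_eq_mul]
            ring
    rw [hrewrite, abs_mul, abs_of_nonneg (inv_nonneg.mpr hδn.le)]
    rw [Real.norm_eq_abs] at hbound
    rw [hvolCtoReal] at hbound
    calc (δ ^ n)⁻¹ * |∫ r in C, (g u - g r)| ≤ (δ ^ n)⁻¹ * ((κ * n * δ ^ β) * δ ^ n) := by
          apply mul_le_mul_of_nonneg_left hbound (inv_nonneg.mpr hδn.le)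
      _ = κ * n * δ ^ β := by field_simp
  -- the null boundary
  have hSsub : S ⊆ box := by
    intro u hu k _
    have := hu k (Set.mem_univ k)
    exact ⟨this.1.le, this.2⟩
  have hSmeas : MeasurableSet S := MeasurableSet.univ_pi fun _ => measurableSet_Ioc
  have hvolbox : volume box = ENNReal.ofReal τ ^ n := by
    rw [hbox, volume_pi_pi]
    simp [Real.volume_Icc]
  have hvolS : volume S = ENNReal.ofReal τ ^ n := by
    rw [hS, volume_pi_pi]
    simp [Real.volume_Ioc]
  have hnull : volume (box \ S) = 0 := by
    rw [measure_diff hSsub hSmeas.nullMeasurableSet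
      (by rw [hvolS]; exact (ENNReal.pow_lt_top ENNReal.ofReal_lt_top).ne),
      hvolbox, hvolS, tsub_self]
  -- main estimate via the constant bound
  have hmain : ‖∫ u in box, (g u - cellAvg n δ g u) ^ 2‖
      ≤ (κ * n * δ ^ β) ^ 2 * (volume box).toReal := by
    apply norm_setIntegral_le_of_norm_le_const_ae' (by
      rw [hvolbox]; exact ENNReal.pow_lt_top ENNReal.ofReal_lt_top)
    have hae : ∀ᵐ u : Fin n → ℝ, u ∉ box \ S :=
      (measure_eq_zero_iff_ae_notMem).mp hnull
    filter_upwards [hae] with u hu hub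
    have huS : u ∈ S := by
      by_contra h
      exact hu ⟨hub, h⟩
    have hk := key u huS
    rw [Real.norm_eq_abs, abs_of_nonneg (sq_nonneg _), ← sq_abs]
    have h0 : (0:ℝ) ≤ κ * n * δ ^ β := by positivity
    nlinarith [abs_nonneg (g u - cellAvg n δ g u)]
  have hle : (∫ u in box, (g u - cellAvg n δ g u) ^ 2)
      ≤ (κ * n * δ ^ β) ^ 2 * (volume box).toReal :=
    le_trans (le_abs_self _) (by rwa [Real.norm_eq_abs] at hmain)
  have hvolboxtoReal : (volume box).toReal = τ ^ n := by
    rw [hvolbox, ENNReal.toReal_pow, ENNReal.toReal_ofReal hτ.le]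
  rw [hvolboxtoReal] at hle
  refine hle.trans (le_of_eq ?_)
  have hδβ : δ ^ β = τ ^ β * (M:ℝ) ^ (-β) := by
    rw [hδdef, Real.div_rpow hτ.le hM0.le, Real.rpow_neg hM0.le, div_eq_mul_inv]
  have hτadd : τ ^ (2 * β + (n:ℝ)) = τ ^ (2*β) * τ ^ (n:ℕ) := by
    rw [Real.rpow_add hτ, Real.rpow_natCast]
  have h2β : τ ^ (2*β) = (τ ^ β) ^ 2 := by
    rw [← Real.rpow_natCast (τ ^ β) 2, ← Real.rpow_mul hτ.le]
    norm_num [mul_comm]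
  have hM2β : (M:ℝ) ^ (-(2*β)) = ((M:ℝ) ^ (-β)) ^ 2 := by
    rw [← Real.rpow_natCast ((M:ℝ) ^ (-β)) 2, ← Real.rpow_mul hM0.le]
    norm_num [mul_comm]
  rw [hτadd, h2β, hM2β, hδβ]
  ring
end

section
/- Let τ > 0, n ≥ 1, M ∈ ℕ with M ≥ 1, δ = τ/M, s_i = i·δ, and h_j = δ^{−1/2}·𝟙_{(s_{j−1}, s_j]} for j = 1,…,M (an orthonormal family in L²([0,τ])). For a ∈ ℕ^M with |a| = n let \widetilde{h}_a = (√(n!)/√(a!))·Sym(h_1^{⊗a_1} ⊗ ⋯ ⊗ h_M^{⊗a_M}). Then for every symmetric g ∈ L²([0,τ]ⁿ), the orthogonal projection Σ_{a ∈ ℕ^M, |a| = n} ⟨g, \widetilde{h}_a⟩_{L²([0,τ]ⁿ)} · \widetilde{h}_a equals, almost everywhere on [0,τ]ⁿ, the step function whose value on each grid cell ∏_{k=1}^n (s_{i_k−1}, s_{i_k}] is the average of g over that cell. -/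
open MeasureTheory

/-- The normalized indicator `h_j = δ^{-1/2}·𝟙_{(jδ, (j+1)δ]}` (0-based index `j`,
corresponding to the paper's `h_{j+1} = δ^{-1/2}·𝟙_{(s_j, s_{j+1}]}`). -/
noncomputable def indicBasis (δ : ℝ) (j : ℕ) (t : ℝ) : ℝ :=
  if t ∈ Set.Ioc ((j : ℝ) * δ) (((j : ℝ) + 1) * δ) then (Real.sqrt δ)⁻¹ else 0

/-- A listing of the multi-index `a ∈ ℕ^M`: the index `j` repeated `a j` times. -/
def listing (M : ℕ) (a : Fin M → ℕ) : List ℕ :=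
  (List.finRange M).flatMap fun j => List.replicate (a j) (j : ℕ)

/-- The factorial `a! = ∏_j a_j!` of a multi-index `a ∈ ℕ^M`. -/
def mFact {M : ℕ} (a : Fin M → ℕ) : ℕ := ∏ j, (a j).factorial

/-- The tensor product `h_1^{⊗ a_1} ⊗ ⋯ ⊗ h_M^{⊗ a_M}` of the normalized indicators,
as a function on `ℝⁿ`. -/
noncomputable def tensorFun (δ : ℝ) (M n : ℕ) (a : Fin M → ℕ) (u : Fin n → ℝ) : ℝ :=
  ∏ k : Fin n, indicBasis δ ((listing M a).getD k 0) (u k)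

/-- The symmetrization `(Sym f)(u) = (1/n!) Σ_{σ ∈ S_n} f(u_{σ(1)}, …, u_{σ(n)})`. -/
noncomputable def symFun (n : ℕ) (f : (Fin n → ℝ) → ℝ) (u : Fin n → ℝ) : ℝ :=
  ((n.factorial : ℝ))⁻¹ * ∑ σ : Equiv.Perm (Fin n), f fun k => u (σ k)

/-- The normalized symmetrized tensor `h̃_a = (√(n!)/√(a!))·Sym(h_1^{⊗a_1}⊗⋯⊗h_M^{⊗a_M})`
built from the normalized indicator basis of mesh `δ`. -/
noncomputable def hTilde (δ : ℝ) (M n : ℕ) (a : Fin M → ℕ) (u : Fin n → ℝ) : ℝ :=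
  (Real.sqrt n.factorial / Real.sqrt (mFact a)) * symFun n (tensorFun δ M n a) u

/-! ### Auxiliary lemmas -/

section Aux

lemma prod_ite_zero {n : ℕ} (p : Fin n → Prop) [DecidablePred p] (c : ℝ) :
    (∏ k, (if p k then c else 0)) = if ∀ k, p k then c ^ n else 0 := by
  by_cases h : ∀ k, p k
  · simp [h, Finset.prod_const]
  · rw [if_neg h]
    obtain ⟨k, hk⟩ := not_forall.mp h
    exact Finset.prod_eq_zero (Finset.mem_univ k) (if_neg hk)

lemma sum_perm_ite {n : ℕ} (q : Equiv.Perm (Fin n) → Prop) [DecidablePred q] (X : ℝ) :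
    (∑ σ : Equiv.Perm (Fin n), if q σ then X else 0)
      = (Fintype.card {σ // q σ} : ℝ) * X := by
  rw [Fintype.card_subtype, ← Finset.sum_filter, Finset.sum_const, nsmul_eq_mul]

lemma exists_perm_comp {α β : Type*} [Fintype α] [DecidableEq α] [DecidableEq β] (f g : α → β)
    (h : ∀ b, Fintype.card {x // f x = b} = Fintype.card {x // g x = b}) :
    ∃ σ : Equiv.Perm α, f ∘ σ = g := by
  classical
  have e : ∀ b, {x // g x = b} ≃ {x // f x = b} := fun b => Fintype.equivOfCardEq (by rw [h b])
  refine ⟨(Equiv.sigmaFiberEquiv g).symm.trans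
    ((Equiv.sigmaCongrRight e).trans (Equiv.sigmaFiberEquiv f)), funext fun x => ?_⟩
  simp only [Function.comp_apply, Equiv.trans_apply]
  have h1 : (Equiv.sigmaFiberEquiv g).symm x = ⟨g x, ⟨x, rfl⟩⟩ := rfl
  rw [h1]
  exact (e (g x) ⟨x, rfl⟩).2

lemma card_perm_comp {α β : Type*} [Fintype α] [DecidableEq α] [Fintype β] [DecidableEq β]
    (f g : α → β) (h : ∀ b, Fintype.card {x // f x = b} = Fintype.card {x // g x = b}) :
    Fintype.card {σ : Equiv.Perm α // f ∘ σ = g}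
      = ∏ b, (Fintype.card {x // f x = b}).factorial := by
  obtain ⟨σ₀, hσ₀⟩ := exists_perm_comp f g h
  have hg : ∀ x, f (σ₀ x) = g x := fun x => congrFun hσ₀ x
  rw [← DomMulAct.stabilizer_card f]
  apply Fintype.card_congr
  refine Equiv.subtypeEquiv (Equiv.mulRight σ₀⁻¹) fun σ => ?_
  constructor
  · intro h'
    funext x
    have := congrFun h' (σ₀⁻¹ x)
    simp only [Function.comp_apply, Equiv.coe_mulRight, Equiv.Perm.mul_apply] at this ⊢
    rw [this, ← hg, show σ₀ (σ₀⁻¹ x) = x from (Equiv.eq_symm_apply σ₀).mp rfl]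
  · intro h'
    funext x
    have := congrFun h' (σ₀ x)
    simp only [Function.comp_apply, Equiv.coe_mulRight, Equiv.Perm.mul_apply,
      fun (y : α) => (Equiv.Perm.inv_eq_iff_eq.mpr rfl : σ₀⁻¹ (σ₀ y) = y)] at this ⊢
    rw [this, hg]

lemma listing_coe {M : ℕ} (a : Fin M → ℕ) :
    (listing M a : Multiset ℕ)
      = (Finset.univ.val : Multiset (Fin M)).bind fun j => Multiset.replicate (a j) (j : ℕ) := by
  have huniv : (Finset.univ.val : Multiset (Fin M))
      = ((List.finRange M : List (Fin M)) : Multiset (Fin M)) := by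
    have := Fin.univ_val_map (id : Fin M → Fin M)
    simpa [List.ofFn_id] using this
  rw [huniv]
  simp only [← Multiset.coe_replicate]
  exact (Multiset.coe_bind _ _).symm

lemma listing_length {M : ℕ} (a : Fin M → ℕ) : (listing M a).length = ∑ j, a j := by
  have := congrArg Multiset.card (listing_coe a)
  simpa [Multiset.card_bind, Finset.sum] using this

lemma listing_count {M : ℕ} (a : Fin M → ℕ) (j : Fin M) :
    Multiset.count (j : ℕ) (listing M a) = a j := by
  rw [listing_coe, Multiset.count_bind]
  have h : ∀ j' : Fin M, Multiset.count (j : ℕ) (Multiset.replicate (a j') (j' : ℕ))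
      = if j' = j then a j' else 0 := by
    intro j'
    rw [Multiset.count_replicate]
    congr 1
    simp [Fin.val_eq_val]
  calc ((Finset.univ.val.map
        fun j' => Multiset.count (j : ℕ) (Multiset.replicate (a j') (j' : ℕ)))).sum
      = ∑ j' : Fin M, if j' = j then a j' else 0 := by
        rw [Finset.sum]; congr 1; exact Multiset.map_congr rfl fun x _ => h x
    _ = a j := by simp

lemma listing_lt {M : ℕ} (a : Fin M → ℕ) {x : ℕ} (hx : x ∈ listing M a) : x < M := by
  simp only [listing, List.mem_flatMap, List.mem_replicate] at hx
  obtain ⟨j, -, -, rfl⟩ := hx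
  exact j.2

lemma listing_getD_lt {M : ℕ} (hM : 0 < M) (a : Fin M → ℕ) (k : ℕ) :
    (listing M a).getD k 0 < M := by
  by_cases h : k < (listing M a).length
  · rw [List.getD_eq_getElem _ _ h]
    exact listing_lt a (List.getElem_mem h)
  · rw [List.getD_eq_default _ _ (not_lt.mp h)]
    exact hM

lemma getD_fiber_card {n : ℕ} (l : List ℕ) (h : l.length = n) (j : ℕ) :
    Fintype.card {k : Fin n // l.getD (k : ℕ) 0 = j} = Multiset.count j (l : Multiset ℕ) := by
  subst h
  have hofn : List.ofFn (fun k : Fin l.length => l.getD (k : ℕ) 0) = l := by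
    apply List.ext_getElem (by simp)
    intro i h1 h2
    simp [List.getD_eq_getElem l 0 h2]
  rw [Fintype.card_subtype]
  have h2 : (l : Multiset ℕ)
      = Multiset.map (fun k : Fin l.length => l.getD (k : ℕ) 0) Finset.univ.val := by
    rw [Fin.univ_val_map, hofn]
  rw [h2, Multiset.count_map, Finset.card_def, Finset.filter_val]
  congr 1
  exact Multiset.filter_congr fun x _ => eq_comm

/-- permutation of coordinates as a measurable equiv with nice defeq -/
noncomputable def permEquiv (n : ℕ) (σ : Equiv.Perm (Fin n)) :
    (Fin n → ℝ) ≃ᵐ (Fin n → ℝ) :=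
  MeasurableEquiv.arrowCongr' (σ⁻¹ : Equiv.Perm (Fin n)) (MeasurableEquiv.refl ℝ)

lemma permEquiv_apply (n : ℕ) (σ : Equiv.Perm (Fin n)) (v : Fin n → ℝ) :
    permEquiv n σ v = fun k => v (σ k) := rfl

lemma permEquiv_mp (n : ℕ) (σ : Equiv.Perm (Fin n)) :
    MeasurePreserving (permEquiv n σ) volume volume :=
  volume_preserving_arrowCongr' _ (MeasurableEquiv.refl ℝ) (MeasurePreserving.id _)

lemma permEquiv_preimage_pi (n : ℕ) (σ : Equiv.Perm (Fin n)) (t : Fin n → Set ℝ) :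
    permEquiv n σ ⁻¹' (Set.univ.pi t) = Set.univ.pi fun k => t (σ⁻¹ k) := by
  ext v
  simp only [Set.mem_preimage, permEquiv_apply, Set.mem_univ_pi]
  constructor
  · intro h k
    simpa using h (σ⁻¹ k)
  · intro h k
    simpa using h (σ k)

lemma setIntegral_permEquiv (n : ℕ) (σ : Equiv.Perm (Fin n)) (F : (Fin n → ℝ) → ℝ)
    (s : Set (Fin n → ℝ)) :
    ∫ v in permEquiv n σ ⁻¹' s, F (permEquiv n σ v) = ∫ v in s, F v :=
  (permEquiv_mp n σ).setIntegral_preimage_emb (permEquiv n σ).measurableEmbedding F s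

lemma indicBasis_eq {δ : ℝ} (hδ : 0 < δ) (j : ℕ) (t : ℝ) :
    indicBasis δ j t = if ⌈t / δ⌉ = (j : ℤ) + 1 then (Real.sqrt δ)⁻¹ else 0 := by
  unfold indicBasis
  refine if_congr ?_ rfl rfl
  rw [Set.mem_Ioc, Int.ceil_eq_iff]
  push_cast
  rw [add_sub_cancel_right, lt_div_iff₀ hδ, div_le_iff₀ hδ]

/-- index of the grid cell containing `t` -/
noncomputable def cellIdx (δ : ℝ) (M : ℕ) (hM : 0 < M) (t : ℝ) : Fin M :=
  ⟨min ((⌈t / δ⌉).toNat - 1) (M - 1), by omega⟩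

lemma cellIdx_spec {δ : ℝ} (hδ : 0 < δ) {M : ℕ} (hM : 0 < M) {t : ℝ} (ht : 0 < t)
    (ht2 : t ≤ M * δ) (j : ℕ) (_hj : j < M) :
    indicBasis δ j t = if (cellIdx δ M hM t : ℕ) = j then (Real.sqrt δ)⁻¹ else 0 := by
  have h1 : 0 < ⌈t / δ⌉ := Int.ceil_pos.mpr (div_pos ht hδ)
  have h2 : ⌈t / δ⌉ ≤ (M : ℤ) := Int.ceil_le.mpr (by rw [div_le_iff₀ hδ]; push_cast; exact ht2)
  rw [indicBasis_eq hδ]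
  refine if_congr ?_ rfl rfl
  simp only [cellIdx]
  omega

lemma cellIdx_val {δ : ℝ} (hδ : 0 < δ) {M : ℕ} (hM : 0 < M) {t : ℝ} (ht : 0 < t)
    (ht2 : t ≤ M * δ) : ((cellIdx δ M hM t : ℕ) : ℤ) = ⌈t / δ⌉ - 1 := by
  have h1 : 0 < ⌈t / δ⌉ := Int.ceil_pos.mpr (div_pos ht hδ)
  have h2 : ⌈t / δ⌉ ≤ (M : ℤ) := Int.ceil_le.mpr (by rw [div_le_iff₀ hδ]; push_cast; exact ht2)
  simp only [cellIdx]
  omega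

/-- the values of the listing, as elements of `Fin M` -/
def Lfin (M : ℕ) (hM : 0 < M) (a : Fin M → ℕ) (n : ℕ) : Fin n → Fin M :=
  fun k => ⟨(listing M a).getD (k : ℕ) 0, listing_getD_lt hM a k⟩

/-- the grid cell in `ℝⁿ` with multi-index `f` -/
def cellSet (δ : ℝ) {M n : ℕ} (f : Fin n → Fin M) : Set (Fin n → ℝ) :=
  Set.univ.pi fun k => Set.Ioc ((f k : ℝ) * δ) (((f k : ℝ) + 1) * δ)

lemma cellSet_measurable {δ : ℝ} {M n : ℕ} (f : Fin n → Fin M) :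
    MeasurableSet (cellSet δ f) :=
  MeasurableSet.univ_pi fun _ => measurableSet_Ioc

lemma cellSet_subset {δ : ℝ} (hδ : 0 < δ) {M n : ℕ} (f : Fin n → Fin M) :
    cellSet δ f ⊆ Set.univ.pi fun _ : Fin n => Set.Icc 0 ((M : ℝ) * δ) := by
  intro v hv k _
  have h := hv k (Set.mem_univ k)
  simp only [Set.mem_Ioc] at h
  have hk : (f k : ℝ) + 1 ≤ M := by exact_mod_cast (f k).2
  constructor
  · have : (0 : ℝ) ≤ (f k : ℝ) * δ := mul_nonneg (by positivity) hδ.le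
    linarith [h.1]
  · calc v k ≤ ((f k : ℝ) + 1) * δ := h.2
      _ ≤ M * δ := by nlinarith

open Classical in
lemma tensorFun_eq {δ : ℝ} {M n : ℕ} (hM : 0 < M) (a : Fin M → ℕ) (v : Fin n → ℝ) :
    tensorFun δ M n a v
      = if v ∈ cellSet δ (Lfin M hM a n) then ((Real.sqrt δ)⁻¹) ^ n else 0 := by
  classical
  unfold tensorFun
  by_cases h : v ∈ cellSet δ (Lfin M hM a n)
  · rw [if_pos h]
    have : ∀ k : Fin n, k ∈ Finset.univ → indicBasis δ ((listing M a).getD ((k : Fin n) : ℕ) 0) (v k)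
        = (Real.sqrt δ)⁻¹ := by
      intro k _
      exact if_pos (h k (Set.mem_univ k))
    rw [Finset.prod_congr rfl this, Finset.prod_const]
    simp
  · rw [if_neg h]
    have : ∃ k, v k ∉ Set.Ioc ((Lfin M hM a n k : ℝ) * δ) (((Lfin M hM a n k : ℝ) + 1) * δ) := by
      by_contra hc
      push_neg at hc
      exact h fun k _ => hc k
    obtain ⟨k, hk⟩ := this
    exact Finset.prod_eq_zero (Finset.mem_univ k) (if_neg hk)

end Aux

/-- From the proof of Lemma 4.4 of the paper: for the normalized-indicator basis of mesh
`δ = τ/M`, the orthogonal projection `Σ_{a ∈ ℕ^M, |a| = n} ⟨g, h̃_a⟩·h̃_a` of a symmetric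
`g ∈ L²([0,τ]ⁿ)` coincides a.e. on `[0,τ]ⁿ` with the step function whose value on each
grid cell is the average of `g` over that cell. -/
theorem projection_eq_cell_average (τ : ℝ) (hτ : 0 < τ) (n : ℕ) (hn : 1 ≤ n)
    (M : ℕ) (hM : 1 ≤ M)
    (g : (Fin n → ℝ) → ℝ)
    (hgL2 : MemLp g 2
      (volume.restrict (Set.univ.pi fun _ : Fin n => Set.Icc (0 : ℝ) τ)))
    (hgsym : ∀ σ : Equiv.Perm (Fin n), (fun u => g fun k => u (σ k))
      =ᵐ[volume.restrict (Set.univ.pi fun _ : Fin n => Set.Icc (0 : ℝ) τ)] g) :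
    (fun u => ∑ a ∈ Finset.Nat.antidiagonalTuple M n,
        (∫ v in Set.univ.pi fun _ : Fin n => Set.Icc (0 : ℝ) τ,
            g v * hTilde (τ / M) M n a v) * hTilde (τ / M) M n a u)
      =ᵐ[volume.restrict (Set.univ.pi fun _ : Fin n => Set.Icc (0 : ℝ) τ)]
        cellAvg n (τ / M) g := by
  classical
  have hMpos : 0 < M := hM
  set δ : ℝ := τ / M with hδdef
  have hδ : 0 < δ := div_pos hτ (by exact_mod_cast hMpos)
  have hMδ : (M : ℝ) * δ = τ := by
    rw [hδdef]; field_simp [Nat.cast_ne_zero.mpr hMpos.ne']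
  set box : Set (Fin n → ℝ) := Set.univ.pi fun _ : Fin n => Set.Icc (0 : ℝ) τ with hboxdef
  have hboxm : MeasurableSet box := MeasurableSet.univ_pi fun _ => measurableSet_Icc
  haveI : IsFiniteMeasure (volume.restrict box) := by
    constructor
    rw [Measure.restrict_apply_univ, hboxdef, volume_pi_pi]
    simp only [Real.volume_Icc, sub_zero, Finset.prod_const, Finset.card_univ, Fintype.card_fin]
    exact ENNReal.pow_lt_top ENNReal.ofReal_lt_top
  have hgInt : Integrable g (volume.restrict box) := hgL2.integrable one_le_two
  have hcellsub : ∀ f : Fin n → Fin M, cellSet δ f ⊆ box := by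
    intro f
    rw [hboxdef, ← hMδ]
    exact cellSet_subset hδ f
  -- change of variables for permutations of coordinates, on the box
  have hbox_pre : ∀ σ : Equiv.Perm (Fin n), permEquiv n σ ⁻¹' box = box := by
    intro σ
    rw [hboxdef, permEquiv_preimage_pi]
  -- the inner products
  have hIA : ∀ a ∈ Finset.Nat.antidiagonalTuple M n,
      (∫ v in box, g v * hTilde δ M n a v)
        = (Real.sqrt n.factorial / Real.sqrt (mFact a)) * ((Real.sqrt δ)⁻¹) ^ n
            * ∫ v in cellSet δ (Lfin M hMpos a n), g v := by
    intro a ha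
    have hCam : MeasurableSet (cellSet δ (Lfin M hMpos a n)) := cellSet_measurable _
    have hfne : (n.factorial : ℝ) ≠ 0 := Nat.cast_ne_zero.mpr n.factorial_ne_zero
    have hpt : ∀ v : Fin n → ℝ, g v * hTilde δ M n a v
        = ∑ σ : Equiv.Perm (Fin n),
            (Real.sqrt n.factorial / Real.sqrt (mFact a) * ((n.factorial : ℝ))⁻¹)
              * (g v * tensorFun δ M n a fun k => v (σ k)) := by
      intro v
      rw [hTilde, symFun]
      simp only [Finset.mul_sum]
      exact Finset.sum_congr rfl fun σ _ => by ring
    have hσint : ∀ σ : Equiv.Perm (Fin n),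
        (∫ v in box, g v * tensorFun δ M n a fun k => v (σ k))
          = ∫ v in box, g v * tensorFun δ M n a v := by
      intro σ
      have h1 := setIntegral_permEquiv n σ
        (fun w => g (fun k => w (σ⁻¹ k)) * tensorFun δ M n a w) box
      rw [hbox_pre σ] at h1
      have h2 : (∫ v in box, g v * tensorFun δ M n a fun k => v (σ k))
          = ∫ v in box,
              g (fun k => permEquiv n σ v (σ⁻¹ k)) * tensorFun δ M n a (permEquiv n σ v) := by
        apply integral_congr_ae
        apply Filter.EventuallyEq.of_eq
        funext v
        simp [permEquiv_apply, fun (y : Fin n) => ((Equiv.eq_symm_apply σ).mp rfl : σ (σ⁻¹ y) = y)]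
      rw [h2, h1]
      apply integral_congr_ae
      filter_upwards [hgsym σ⁻¹] with w hw
      simpa using congrArg (· * tensorFun δ M n a w) hw
    have hbox_tensor : (∫ v in box, g v * tensorFun δ M n a v)
        = ((Real.sqrt δ)⁻¹) ^ n * ∫ v in cellSet δ (Lfin M hMpos a n), g v := by
      have hptw : ∀ v, g v * tensorFun δ M n a v
          = ((Real.sqrt δ)⁻¹) ^ n * (cellSet δ (Lfin M hMpos a n)).indicator g v := by
        intro v
        rw [tensorFun_eq hMpos a v]
        by_cases h : v ∈ cellSet δ (Lfin M hMpos a n)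
        · rw [if_pos h, Set.indicator_of_mem h]; ring
        · rw [if_neg h, Set.indicator_of_notMem h]; ring
      simp only [hptw]
      rw [MeasureTheory.integral_const_mul, setIntegral_indicator hCam,
        Set.inter_eq_self_of_subset_right (hcellsub _)]
    have hint : ∀ σ : Equiv.Perm (Fin n), Integrable
        (fun v => (Real.sqrt n.factorial / Real.sqrt (mFact a) * ((n.factorial : ℝ))⁻¹)
          * (g v * tensorFun δ M n a fun k => v (σ k))) (volume.restrict box) := by
      intro σ
      have hSm : MeasurableSet (permEquiv n σ ⁻¹' (cellSet δ (Lfin M hMpos a n))) :=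
        hCam.preimage (permEquiv n σ).measurable
      have hptw : ∀ v, (Real.sqrt n.factorial / Real.sqrt (mFact a) * ((n.factorial : ℝ))⁻¹)
            * (g v * tensorFun δ M n a fun k => v (σ k))
          = (Real.sqrt n.factorial / Real.sqrt (mFact a) * ((n.factorial : ℝ))⁻¹
              * ((Real.sqrt δ)⁻¹) ^ n)
            * ((permEquiv n σ ⁻¹' (cellSet δ (Lfin M hMpos a n))).indicator g v) := by
        intro v
        have ht : tensorFun δ M n a (fun k => v (σ k))
            = if v ∈ permEquiv n σ ⁻¹' (cellSet δ (Lfin M hMpos a n))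
              then ((Real.sqrt δ)⁻¹) ^ n else 0 :=
          tensorFun_eq hMpos a (permEquiv n σ v)
        rw [ht]
        by_cases h : v ∈ permEquiv n σ ⁻¹' (cellSet δ (Lfin M hMpos a n))
        · rw [if_pos h, Set.indicator_of_mem h]; ring
        · rw [if_neg h, Set.indicator_of_notMem h]; ring
      simp only [hptw]
      exact (hgInt.indicator hSm).const_mul _
    calc (∫ v in box, g v * hTilde δ M n a v)
        = ∫ v in box, ∑ σ : Equiv.Perm (Fin n),
            (Real.sqrt n.factorial / Real.sqrt (mFact a) * ((n.factorial : ℝ))⁻¹)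
              * (g v * tensorFun δ M n a fun k => v (σ k)) := by simp only [hpt]
      _ = ∑ σ : Equiv.Perm (Fin n), ∫ v in box,
            (Real.sqrt n.factorial / Real.sqrt (mFact a) * ((n.factorial : ℝ))⁻¹)
              * (g v * tensorFun δ M n a fun k => v (σ k)) :=
          integral_finset_sum Finset.univ fun σ _ => hint σ
      _ = ∑ _σ : Equiv.Perm (Fin n),
            (Real.sqrt n.factorial / Real.sqrt (mFact a) * ((n.factorial : ℝ))⁻¹)
              * (((Real.sqrt δ)⁻¹) ^ n * ∫ v in cellSet δ (Lfin M hMpos a n), g v) := by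
          refine Finset.sum_congr rfl fun σ _ => ?_
          rw [MeasureTheory.integral_const_mul, hσint σ, hbox_tensor]
      _ = (Real.sqrt n.factorial / Real.sqrt (mFact a)) * ((Real.sqrt δ)⁻¹) ^ n
            * ∫ v in cellSet δ (Lfin M hMpos a n), g v := by
          rw [Finset.sum_const, Finset.card_univ, Fintype.card_perm, Fintype.card_fin,
            nsmul_eq_mul]
          have hcancel : ∀ x y : ℝ,
              (n.factorial : ℝ) * (x * ((n.factorial : ℝ))⁻¹ * y) = x * y := fun x y => by
            rw [mul_comm x, ← mul_assoc, ← mul_assoc, mul_inv_cancel₀ hfne, one_mul]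
          rw [hcancel]
          ring
  -- permutation invariance of cell integrals
  have hCI : ∀ (f : Fin n → Fin M) (σ : Equiv.Perm (Fin n)),
      (∫ v in cellSet δ (fun k => f (σ k)), g v) = ∫ v in cellSet δ f, g v := by
    intro f σ
    have hpre : permEquiv n σ⁻¹ ⁻¹' (cellSet δ f) = cellSet δ (fun k => f (σ k)) := by
      have := permEquiv_preimage_pi n σ⁻¹
        (fun k => Set.Ioc ((f k : ℝ) * δ) (((f k : ℝ) + 1) * δ))
      simpa [cellSet] using this
    have h1 := setIntegral_permEquiv n σ⁻¹ g (cellSet δ f)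
    rw [hpre] at h1
    rw [← h1]
    apply integral_congr_ae
    have hsub : cellSet δ (fun k => f (σ k)) ⊆ box := hcellsub _
    have := (hgsym σ⁻¹).symm.filter_mono (ae_mono (Measure.restrict_mono hsub le_rfl))
    simpa [permEquiv_apply] using this
  -- a.e. positivity of coordinates
  have h0 : ∀ᵐ u ∂(volume.restrict box), ∀ k, u k ≠ 0 := by
    rw [Filter.eventually_all]
    intro k
    refine (ae_restrict_of_ae ?_)
    have hnull : volume {u : Fin n → ℝ | u k = 0} = 0 := by
      have hset : {u : Fin n → ℝ | u k = 0}
          = Set.univ.pi fun i => if i = k then ({0} : Set ℝ) else Set.univ := by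
        ext v
        simp only [Set.mem_setOf_eq, Set.mem_univ_pi]
        constructor
        · intro hv i
          by_cases hik : i = k
          · subst hik; simp [hv]
          · simp [hik]
        · intro hv
          have := hv k
          simpa using this
      rw [hset, volume_pi_pi]
      apply Finset.prod_eq_zero (Finset.mem_univ k)
      simp
    filter_upwards [measure_eq_zero_iff_ae_notMem.mp hnull] with u hu
    exact hu
  filter_upwards [h0, ae_restrict_mem hboxm] with u hu0 hubox
  have hup : ∀ k, 0 < u k := fun k =>
    lt_of_le_of_ne (Set.mem_univ_pi.mp hubox k).1 (Ne.symm (hu0 k))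
  have huM : ∀ k, u k ≤ (M : ℝ) * δ := fun k => by
    rw [hMδ]; exact (Set.mem_univ_pi.mp hubox k).2
  set idxF : Fin n → Fin M := fun k => cellIdx δ M hMpos (u k) with hidxF
  set aU : Fin M → ℕ := fun j => Fintype.card {k // idxF k = j} with haUdef
  have haUsum : ∑ j, aU j = n := by
    have h1 := Fintype.card_congr (Equiv.sigmaFiberEquiv idxF)
    simp only [Fintype.card_sigma, Fintype.card_fin] at h1
    simp only [haUdef]
    exact h1
  have haUmem : aU ∈ Finset.Nat.antidiagonalTuple M n :=
    Finset.Nat.mem_antidiagonalTuple.mpr haUsum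
  have hlen : ∀ a ∈ Finset.Nat.antidiagonalTuple M n, (listing M a).length = n := fun a ha => by
    rw [listing_length]; exact Finset.Nat.mem_antidiagonalTuple.mp ha
  have hfibL : ∀ a ∈ Finset.Nat.antidiagonalTuple M n, ∀ j : Fin M,
      Fintype.card {k // Lfin M hMpos a n k = j} = a j := by
    intro a ha j
    have e : {k : Fin n // Lfin M hMpos a n k = j}
        ≃ {k : Fin n // (listing M a).getD (k : ℕ) 0 = (j : ℕ)} :=
      Equiv.subtypeEquivRight fun k => by simp [Lfin, Fin.ext_iff]
    rw [Fintype.card_congr e, getD_fiber_card _ (hlen a ha), listing_count]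
  have htu : ∀ (a : Fin M → ℕ) (σ : Equiv.Perm (Fin n)),
      tensorFun δ M n a (fun k => u (σ k))
        = if (fun k => idxF (σ k)) = Lfin M hMpos a n then ((Real.sqrt δ)⁻¹) ^ n else 0 := by
    intro a σ
    have hfac : ∀ k : Fin n, indicBasis δ ((listing M a).getD ((k : Fin n) : ℕ) 0) (u (σ k))
        = if idxF (σ k) = Lfin M hMpos a n k then (Real.sqrt δ)⁻¹ else 0 := by
      intro k
      rw [cellIdx_spec hδ hMpos (hup (σ k)) (huM (σ k)) _ (listing_getD_lt hMpos a (k : ℕ))]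
      refine if_congr ?_ rfl rfl
      rw [Fin.ext_iff]
      exact Iff.rfl
    unfold tensorFun
    simp only [hfac]
    by_cases h : (fun k => idxF (σ k)) = Lfin M hMpos a n
    · rw [if_pos h]
      have hall : ∀ k : Fin n, k ∈ Finset.univ →
          (if idxF (σ k) = Lfin M hMpos a n k then (Real.sqrt δ)⁻¹ else 0)
            = (Real.sqrt δ)⁻¹ := fun k _ => if_pos (congrFun h k)
      rw [Finset.prod_congr rfl hall, Finset.prod_const, Finset.card_univ, Fintype.card_fin]
    · rw [if_neg h]
      obtain ⟨k, hk⟩ := Function.ne_iff.mp h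
      exact Finset.prod_eq_zero (Finset.mem_univ k) (if_neg hk)
  have hHT : ∀ a : Fin M → ℕ,
      hTilde δ M n a u = (Real.sqrt n.factorial / Real.sqrt (mFact a))
        * ((n.factorial : ℝ))⁻¹ * (((Real.sqrt δ)⁻¹) ^ n)
        * (Fintype.card
            {σ : Equiv.Perm (Fin n) // (fun k => idxF (σ k)) = Lfin M hMpos a n} : ℝ) := by
    intro a
    rw [hTilde, symFun]
    simp only [htu a]
    rw [sum_perm_ite]
    ring
  have hvan : ∀ a ∈ Finset.Nat.antidiagonalTuple M n, a ≠ aU →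
      Fintype.card {σ : Equiv.Perm (Fin n) // (fun k => idxF (σ k)) = Lfin M hMpos a n}
        = 0 := by
    intro a ha hne
    rw [Fintype.card_eq_zero_iff]
    by_contra hne2
    rw [not_isEmpty_iff] at hne2
    obtain ⟨σ, hσ⟩ := hne2
    apply hne
    funext j
    have h1 : a j = Fintype.card {k // Lfin M hMpos a n k = j} := (hfibL a ha j).symm
    have h2 : {k : Fin n // Lfin M hMpos a n k = j} ≃ {k : Fin n // idxF (σ k) = j} :=
      Equiv.subtypeEquivRight fun k => by rw [congrFun hσ k]
    have h3 : {k : Fin n // idxF (σ k) = j} ≃ {k : Fin n // idxF k = j} :=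
      Equiv.subtypeEquiv σ fun k => Iff.rfl
    rw [h1, Fintype.card_congr h2, Fintype.card_congr h3]
  have hfibU : ∀ j : Fin M, Fintype.card {k // idxF k = j}
      = Fintype.card {k // Lfin M hMpos aU n k = j} := fun j => (hfibL aU haUmem j).symm
  have hcardU : Fintype.card
      {σ : Equiv.Perm (Fin n) // (fun k => idxF (σ k)) = Lfin M hMpos aU n} = mFact aU := by
    have h := card_perm_comp idxF (Lfin M hMpos aU n) hfibU
    calc Fintype.card {σ : Equiv.Perm (Fin n) // (fun k => idxF (σ k)) = Lfin M hMpos aU n}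
        = Fintype.card {σ : Equiv.Perm (Fin n) // idxF ∘ σ = Lfin M hMpos aU n} := rfl
      _ = ∏ j, (Fintype.card {x // idxF x = j}).factorial := h
      _ = mFact aU := by rw [mFact]
  obtain ⟨σ₀, hσ₀⟩ := exists_perm_comp idxF (Lfin M hMpos aU n) hfibU
  have hJ : (∫ v in cellSet δ (Lfin M hMpos aU n), g v) = ∫ v in cellSet δ idxF, g v := by
    rw [← hσ₀]
    exact hCI idxF σ₀
  have hAvg : cellAvg n δ g u = ((δ ^ n)⁻¹) * ∫ v in cellSet δ idxF, g v := by
    rw [cellAvg]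
    have hset : (Set.univ.pi fun k =>
          Set.Ioc (δ * ((⌈u k / δ⌉ : ℝ) - 1)) (δ * (⌈u k / δ⌉ : ℝ)))
        = cellSet δ idxF := by
      unfold cellSet
      refine congrArg (Set.pi Set.univ) (funext fun k => ?_)
      have hz := cellIdx_val hδ hMpos (hup k) (huM k)
      have hcast : ((idxF k : ℕ) : ℝ) = (⌈u k / δ⌉ : ℝ) - 1 := by
        have : (((idxF k : ℕ) : ℤ) : ℝ) = ((⌈u k / δ⌉ - 1 : ℤ) : ℝ) := by exact_mod_cast congrArg Int.cast hz
        push_cast at this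
        exact_mod_cast this
      rw [hcast]
      congr 1 <;> ring
    rw [hset]
  rw [Finset.sum_eq_single_of_mem aU haUmem (fun a ha hne => by
    rw [hHT a, hvan a ha hne]; simp)]
  rw [hIA aU haUmem, hHT aU, hcardU, hJ, hAvg]
  have hmpos : 0 < mFact aU := Finset.prod_pos fun j _ => Nat.factorial_pos _
  have hA2 : Real.sqrt n.factorial * Real.sqrt n.factorial = (n.factorial : ℝ) :=
    Real.mul_self_sqrt (by positivity)
  have hB2 : Real.sqrt (mFact aU) * Real.sqrt (mFact aU) = (mFact aU : ℝ) :=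
    Real.mul_self_sqrt (by positivity)
  have hc2 : ((Real.sqrt δ)⁻¹) ^ n * ((Real.sqrt δ)⁻¹) ^ n = (δ ^ n)⁻¹ := by
    rw [← mul_pow, ← mul_inv, Real.mul_self_sqrt hδ.le, inv_pow]
  have hfne : (n.factorial : ℝ) ≠ 0 := Nat.cast_ne_zero.mpr n.factorial_ne_zero
  have hmne : (mFact aU : ℝ) ≠ 0 := Nat.cast_ne_zero.mpr hmpos.ne'
  have hBne : Real.sqrt (mFact aU) ≠ 0 := by
    rw [← hB2] at hmne; exact fun hz => hmne (by rw [hz, mul_zero])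
  set J := ∫ v in cellSet δ idxF, g v with hJdef
  calc (Real.sqrt n.factorial / Real.sqrt (mFact aU) * ((Real.sqrt δ)⁻¹) ^ n * J)
        * (Real.sqrt n.factorial / Real.sqrt (mFact aU) * ((n.factorial : ℝ))⁻¹
            * ((Real.sqrt δ)⁻¹) ^ n * (mFact aU : ℝ))
      = ((Real.sqrt n.factorial * Real.sqrt n.factorial)
          / (Real.sqrt (mFact aU) * Real.sqrt (mFact aU)))
          * ((n.factorial : ℝ))⁻¹ * (((Real.sqrt δ)⁻¹) ^ n * ((Real.sqrt δ)⁻¹) ^ n)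
          * (mFact aU : ℝ) * J := by ring
    _ = (δ ^ n)⁻¹ * J := by
        rw [hA2, hB2, hc2]
        field_simp
end
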